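/- Let q > 0, a > 0, and let f : (−L, L) → ℝ be a twice differentiable positive solution of f''(t) = q · coth(f(t)) · (1 + f'(t)²) with f(0) = a, f'(0) = 0. Then for every t ∈ (0, L), t = sinh(a)^q · ∫_a^{f(t)} (sinh(u)^{2q} − sinh(a)^{2q})^{−1/2} du. -/

import Mathlib

/-- For a positive solution of `f'' = q coth(f)(1+f'²)`, `f(0)=a`, `f'(0)=0`
on a symmetric open interval `(-L, L)` (encoded as an open convex set containing `0`,
stable under `t ↦ -t`), for every `t ∈ (0, L)` one has
`t = sinh(a)^q ∫_a^{f(t)} (sinh(u)^{2q} - sinh(a)^{2q})^{-1/2} du`. -/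
theorem stmt_5 (q a : ℝ) (hq : 0 < q) (ha : 0 < a)
    (I : Set ℝ) (hIopen : IsOpen I) (hIconv : Convex ℝ I) (h0 : (0 : ℝ) ∈ I)
    (hsymm : ∀ t ∈ I, -t ∈ I)
    (f f' f'' : ℝ → ℝ)
    (hf' : ∀ t ∈ I, HasDerivAt f (f' t) t)
    (hf'' : ∀ t ∈ I, HasDerivAt f' (f'' t) t)
    (hpos : ∀ t ∈ I, 0 < f t)
    (hode : ∀ t ∈ I, f'' t = q * (Real.cosh (f t) / Real.sinh (f t)) * (1 + f' t ^ 2))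
    (hfa : f 0 = a) (hf'0 : f' 0 = 0) :
    ∀ t ∈ I, 0 < t →
      t = Real.sinh a ^ q *
        ∫ u in a..f t, (Real.sinh u ^ (2 * q) - Real.sinh a ^ (2 * q)) ^ (-(1 : ℝ) / 2) := by
  intro t htI ht
  open Real MeasureTheory Set in
  set A := Real.sinh a with hAdef
  have hA : 0 < A := Real.sinh_pos_iff.2 ha
  have hIcc : Set.Icc (0:ℝ) t ⊆ I := fun x hx => hIconv.ordConnected.out h0 htI hx
  have hsf : ∀ x ∈ I, 0 < Real.sinh (f x) := fun x hx => Real.sinh_pos_iff.2 (hpos x hx)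
  have hD : ∀ x : ℝ, (0:ℝ) < 1 + f' x ^ 2 := fun x => by positivity
  have hf''pos : ∀ x ∈ I, 0 < f'' x := by
    intro x hx
    rw [hode x hx]
    exact mul_pos (mul_pos hq (div_pos (Real.cosh_pos (f x)) (hsf x hx))) (hD x)
  have hf'mono : StrictMonoOn f' (Set.Icc 0 t) := by
    apply strictMonoOn_of_deriv_pos (convex_Icc 0 t)
    · exact fun x hx => (hf'' x (hIcc hx)).continuousAt.continuousWithinAt
    · intro x hx
      rw [interior_Icc] at hx
      have hxI : x ∈ I := hIcc ⟨hx.1.le, hx.2.le⟩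
      rw [(hf'' x hxI).deriv]
      exact hf''pos x hxI
  have hf'pos : ∀ x ∈ Set.Ioc (0:ℝ) t, 0 < f' x := by
    intro x hx
    have := hf'mono (left_mem_Icc.2 ht.le) ⟨hx.1.le, hx.2⟩ hx.1
    rwa [hf'0] at this
  have hfmono : StrictMonoOn f (Set.Icc 0 t) := by
    apply strictMonoOn_of_deriv_pos (convex_Icc 0 t)
    · exact fun x hx => (hf' x (hIcc hx)).continuousAt.continuousWithinAt
    · intro x hx
      rw [interior_Icc] at hx
      rw [(hf' x (hIcc ⟨hx.1.le, hx.2.le⟩)).deriv]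
      exact hf'pos x ⟨hx.1, hx.2.le⟩
  set φ : ℝ → ℝ := fun x => q * Real.log (Real.sinh (f x)) - (1/2) * Real.log (1 + f' x ^ 2) with hφdef
  have hφderiv : ∀ x ∈ I, HasDerivAt φ 0 x := by
    intro x hx
    have hs := (hsf x hx).ne'
    have hd := (hD x).ne'
    have h1 : HasDerivAt (fun y => Real.sinh (f y)) (Real.cosh (f x) * f' x) x :=
      (Real.hasDerivAt_sinh (f x)).comp x (hf' x hx)
    have h2 : HasDerivAt (fun y => Real.log (Real.sinh (f y)))
        (Real.cosh (f x) * f' x / Real.sinh (f x)) x := h1.log hs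
    have h3 : HasDerivAt (fun y => 1 + f' y ^ 2) (2 * f' x * f'' x) x := by
      have h4 := ((hf'' x hx).pow 2).const_add (1:ℝ)
      refine h4.congr_deriv ?_
      push_cast
      ring
    have h5 : HasDerivAt (fun y => Real.log (1 + f' y ^ 2))
        (2 * f' x * f'' x / (1 + f' x ^ 2)) x := h3.log hd
    have h6 := (h2.const_mul q).sub (h5.const_mul (1/2))
    refine h6.congr_deriv ?_
    rw [hode x hx]
    field_simp
    ring
  have hφconst : ∀ x ∈ Set.Icc (0:ℝ) t, φ x = φ 0 := by
    apply constant_of_has_deriv_right_zero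
    · exact fun x hx => (hφderiv x (hIcc hx)).continuousAt.continuousWithinAt
    · exact fun x hx => (hφderiv x (hIcc ⟨hx.1, hx.2.le⟩)).hasDerivWithinAt
  have hφ0 : φ 0 = q * Real.log A := by
    simp [hφdef, hfa, hf'0]
    exact Or.inl rfl
  have hkey : ∀ x ∈ Set.Icc (0:ℝ) t,
      Real.sinh (f x) ^ (2*q) = A ^ (2*q) * (1 + f' x ^ 2) := by
    intro x hx
    have hc : q * Real.log (Real.sinh (f x)) - (1/2) * Real.log (1 + f' x ^ 2)
        = q * Real.log A := by
      have := hφconst x hx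
      rw [hφ0] at this
      simpa [hφdef] using this
    have hP := hsf x (hIcc hx)
    have hDx := hD x
    rw [Real.rpow_def_of_pos hP, Real.rpow_def_of_pos hA, ← Real.exp_log hDx, ← Real.exp_add]
    congr 1
    linarith
  set g : ℝ → ℝ := fun u => (Real.sinh u ^ (2*q) - A ^ (2*q)) ^ (-(1:ℝ)/2) with hgdef
  have hAq : 0 < A ^ q := Real.rpow_pos_of_pos hA q
  have hsq : ∀ z : ℝ, 0 < z → (z ^ 2 : ℝ) ^ (-(1:ℝ)/2) = z⁻¹ := by
    intro z hz
    rw [← Real.rpow_natCast z 2, ← Real.rpow_mul hz.le]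
    norm_num
    exact Real.rpow_neg_one z
  have hpt : ∀ x ∈ Set.Ioc (0:ℝ) t, f' x * g (f x) = (A ^ q)⁻¹ := by
    intro x hx
    have hx' : x ∈ Set.Icc (0:ℝ) t := ⟨hx.1.le, hx.2⟩
    have hk := hkey x hx'
    have hfp := hf'pos x hx
    have h2 : A ^ (2*q) = (A ^ q) ^ 2 := by
      rw [← Real.rpow_natCast (A ^ q) 2, ← Real.rpow_mul hA.le]
      norm_num
      ring_nf
    have hE : Real.sinh (f x) ^ (2*q) - A ^ (2*q) = (A ^ q * f' x) ^ 2 := by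
      rw [hk, h2]
      ring
    rw [hgdef]
    simp only
    rw [hE, hsq _ (mul_pos hAq hfp), mul_inv]
    field_simp
  have hT : a < f t := by
    have := hfmono (left_mem_Icc.2 ht.le) (right_mem_Icc.2 ht.le) ht
    rwa [hfa] at this
  set ψ : ℝ → ℝ := fun u => Real.sinh u ^ (2*q) with hψdef
  set ψ' : ℝ → ℝ := fun u => 2*q * Real.cosh u * Real.sinh u ^ (2*q-1) with hψ'def
  have hψderiv : ∀ u : ℝ, 0 < u → HasDerivAt ψ (ψ' u) u := by
    intro u hu
    have hsu : Real.sinh u ≠ 0 := (Real.sinh_pos_iff.2 hu).ne'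
    have := (Real.hasDerivAt_sinh u).rpow_const (p := 2*q) (Or.inl hsu)
    convert this using 1
    ring
  have hψ'pos : ∀ u : ℝ, 0 < u → 0 < ψ' u := by
    intro u hu
    exact mul_pos (mul_pos (by linarith) (Real.cosh_pos u))
      (Real.rpow_pos_of_pos (Real.sinh_pos_iff.2 hu) _)
  have hψ'cont : ContinuousOn ψ' (Set.Icc a (f t)) := by
    apply ContinuousOn.mul (by fun_prop)
    intro u hu
    exact (Real.continuous_sinh.continuousAt.rpow_const
      (Or.inl (Real.sinh_pos_iff.2 (lt_of_lt_of_le ha hu.1)).ne')).continuousWithinAt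
  obtain ⟨u0, hu0mem, hu0min⟩ := (isCompact_Icc :
      IsCompact (Set.Icc a (f t))).exists_isMinOn (Set.nonempty_Icc.2 hT.le) hψ'cont
  set c : ℝ := ψ' u0 with hcdef
  have hc : 0 < c := hψ'pos u0 (lt_of_lt_of_le ha hu0mem.1)
  have hψcont : ContinuousOn ψ (Set.Icc a (f t)) := fun u hu =>
    (hψderiv u (lt_of_lt_of_le ha hu.1)).continuousAt.continuousWithinAt
  have hlb : ∀ u ∈ Set.Icc a (f t), c * (u - a) ≤ ψ u - ψ a := by
    intro u hu
    have hmono : MonotoneOn (fun v => ψ v - c * v) (Set.Icc a (f t)) := by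
      apply monotoneOn_of_deriv_nonneg (convex_Icc _ _)
      · exact hψcont.sub (continuousOn_const.mul continuousOn_id)
      · intro v hv
        rw [interior_Icc] at hv
        exact ((hψderiv v (lt_of_lt_of_le ha hv.1.le)).sub
          ((hasDerivAt_id v).const_mul c)).differentiableAt.differentiableWithinAt
      · intro v hv
        rw [interior_Icc] at hv
        have hd : HasDerivAt (fun v => ψ v - c * v) (ψ' v - c * 1) v :=
          (hψderiv v (lt_of_lt_of_le ha hv.1.le)).sub ((hasDerivAt_id v).const_mul c)
        rw [hd.deriv]
        have h2 : ψ' u0 ≤ ψ' v := hu0min ⟨hv.1.le, hv.2.le⟩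
        simp only [hcdef, mul_one]
        linarith
    have := hmono (left_mem_Icc.2 hT.le) hu hu.1
    simp only at this
    linarith
  have hgmeas : Measurable g := by
    apply Measurable.pow_const
    exact (Real.continuous_sinh.measurable.pow_const _).sub measurable_const
  have hψa : ψ a = A ^ (2*q) := by rw [hψdef, hAdef]
  have hmint : IntervalIntegrable (fun u : ℝ => (u - a) ^ (-(1:ℝ)/2)) volume a (f t) := by
    have h := (intervalIntegral.intervalIntegrable_rpow'
      (a := 0) (b := f t - a) (by norm_num : (-1:ℝ) < -(1:ℝ)/2)).comp_sub_right a
    simpa using h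
  have hgint : IntegrableOn g (Set.Icc a (f t)) := by
    rw [integrableOn_Icc_iff_integrableOn_Ioc]
    have hmaj : IntegrableOn (fun u : ℝ => c ^ (-(1:ℝ)/2) * (u - a) ^ (-(1:ℝ)/2))
        (Set.Ioc a (f t)) := by
      exact (hmint.const_mul (c ^ (-(1:ℝ)/2))).1
    apply MeasureTheory.Integrable.mono' hmaj hgmeas.aestronglyMeasurable
    filter_upwards [MeasureTheory.ae_restrict_mem measurableSet_Ioc] with u hu
    have hua : 0 < u - a := sub_pos.2 hu.1
    have hlbu := hlb u ⟨hu.1.le, hu.2⟩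
    have hpos1 : 0 < c * (u - a) := mul_pos hc hua
    have hgu : g u = (ψ u - ψ a) ^ (-(1:ℝ)/2) := by rw [hgdef, hψa]
    rw [Real.norm_eq_abs, abs_of_nonneg, hgu]
    · calc (ψ u - ψ a) ^ (-(1:ℝ)/2) ≤ (c * (u - a)) ^ (-(1:ℝ)/2) :=
            Real.rpow_le_rpow_of_nonpos hpos1 hlbu (by norm_num)
        _ = c ^ (-(1:ℝ)/2) * (u - a) ^ (-(1:ℝ)/2) := Real.mul_rpow hc.le hua.le
    · rw [hgu]
      exact Real.rpow_nonneg (by linarith) _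
  have himg : ∀ x ∈ Set.Icc (0:ℝ) t, f x ∈ Set.Icc a (f t) := by
    intro x hx
    constructor
    · rw [← hfa]
      exact hfmono.monotoneOn (left_mem_Icc.2 ht.le) hx hx.1
    · exact hfmono.monotoneOn hx (right_mem_Icc.2 ht.le) hx.2
  have hsub : (∫ x in (0:ℝ)..t, f' x • (g ∘ f) x) = ∫ u in (f 0)..(f t), g u := by
    apply intervalIntegral.integral_comp_smul_deriv'''
    · rw [Set.uIcc_of_le ht.le]
      exact fun x hx => (hf' x (hIcc hx)).continuousAt.continuousWithinAt
    · rw [min_eq_left ht.le, max_eq_right ht.le]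
      intro x hx
      exact (hf' x (hIcc ⟨hx.1.le, hx.2.le⟩)).hasDerivWithinAt
    · rw [min_eq_left ht.le, max_eq_right ht.le]
      intro u hu
      obtain ⟨x, hx, rfl⟩ := hu
      have hxa : a < f x := by
        rw [← hfa]
        exact hfmono (left_mem_Icc.2 ht.le) ⟨hx.1.le, hx.2.le⟩ hx.1
      have hne : Real.sinh (f x) ^ (2*q) - A ^ (2*q) ≠ 0 := by
        have : A ^ (2*q) < Real.sinh (f x) ^ (2*q) :=
          Real.rpow_lt_rpow hA.le (Real.sinh_lt_sinh.2 hxa) (by linarith)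
        linarith
      exact (((Real.continuous_sinh.continuousAt.rpow_const
        (Or.inl (Real.sinh_pos_iff.2 (lt_trans ha hxa)).ne')).sub
        continuousAt_const).rpow_const (Or.inl hne)).continuousWithinAt
    · apply hgint.mono_set
      rw [Set.uIcc_of_le ht.le]
      intro u hu
      obtain ⟨x, hx, rfl⟩ := hu
      exact himg x hx
    · rw [Set.uIcc_of_le ht.le, integrableOn_Icc_iff_integrableOn_Ioc]
      apply MeasureTheory.Integrable.congr
        (integrableOn_const measure_Ioc_lt_top.ne :
          IntegrableOn (fun _ : ℝ => (A ^ q)⁻¹) (Set.Ioc 0 t) volume)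
      filter_upwards [MeasureTheory.ae_restrict_mem measurableSet_Ioc] with x hx
      rw [Function.comp_apply, smul_eq_mul] at *
      exact (hpt x hx).symm
  have hleft : (∫ x in (0:ℝ)..t, f' x • (g ∘ f) x) = t * (A ^ q)⁻¹ := by
    rw [intervalIntegral.integral_congr_ae (g := fun _ => (A ^ q)⁻¹) ?_,
      intervalIntegral.integral_const, smul_eq_mul, sub_zero]
    apply Filter.Eventually.of_forall
    intro x hx
    rw [Set.uIoc_of_le ht.le] at hx
    rw [Function.comp_apply, smul_eq_mul]
    exact hpt x hx
  rw [hfa] at hsub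
  have hfin : (∫ u in a..f t, g u) = t * (A ^ q)⁻¹ := by rw [← hsub, hleft]
  show t = A ^ q * ∫ u in a..f t, g u
  rw [hfin, mul_comm t, ← mul_assoc, mul_inv_cancel₀ hAq.ne', one_mul]
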